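/- Let A ∈ ℝ^{n×d} with ‖A‖ ≤ R for some R ≥ 4, let β ∈ (0, 0.1), and let x, y ∈ ℝ^d satisfy ‖A(x − y)‖_∞ < 0.01, ⟨exp(Ax), 1_n⟩ ≥ β, ⟨exp(Ay), 1_n⟩ ≥ β, ‖x‖_2 ≤ R, ‖y‖_2 ≤ R. Define f(z) := ⟨exp(Az), 1_n⟩^{-1} · exp(Az). Then ‖f(x) − f(y)‖_2 ≤ β^{-2} n^{1.5} exp(3R²) · ‖x − y‖_2. -/

import Mathlib

open Matrix

/-- The Euclidean (ℓ2) norm of a vector in ℝ^n. -/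
noncomputable def l2norm {n : ℕ} (u : Fin n → ℝ) : ℝ := Real.sqrt (∑ i, u i ^ 2)

/-- The supremum (ℓ∞) norm of a vector in ℝ^n. -/
noncomputable def linfNorm {n : ℕ} (u : Fin n → ℝ) : ℝ := ⨆ i, |u i|

/-- The spectral (ℓ2 operator) norm of a matrix. -/
noncomputable def specNorm {n d : ℕ} (A : Matrix (Fin n) (Fin d) ℝ) : ℝ :=
  ‖LinearMap.toContinuousLinearMap (Matrix.toEuclideanLin A)‖

/-- The softmax function f(z) = ⟨exp(Az), 1_n⟩⁻¹ · exp(Az). -/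
noncomputable def softmaxFn {n d : ℕ} (A : Matrix (Fin n) (Fin d) ℝ) (z : Fin d → ℝ) :
    Fin n → ℝ :=
  (∑ i, Real.exp (A.mulVec z i))⁻¹ • fun i => Real.exp (A.mulVec z i)

lemma l2norm_eq_norm {n : ℕ} (u : Fin n → ℝ) :
    l2norm u = ‖(WithLp.equiv 2 (Fin n → ℝ)).symm u‖ := by
  rw [EuclideanSpace.norm_eq, l2norm]
  congr 1
  apply Finset.sum_congr rfl
  intro i _
  rw [WithLp.equiv_symm_apply, WithLp.ofLp_toLp, Real.norm_eq_abs, sq_abs]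

lemma l2norm_nonneg {n : ℕ} (u : Fin n → ℝ) : 0 ≤ l2norm u := Real.sqrt_nonneg _

lemma abs_le_l2norm {n : ℕ} (u : Fin n → ℝ) (i : Fin n) : |u i| ≤ l2norm u := by
  rw [l2norm, ← Real.sqrt_sq_eq_abs]
  apply Real.sqrt_le_sqrt
  exact Finset.single_le_sum (fun j _ => sq_nonneg (u j)) (Finset.mem_univ i)

lemma mulVec_l2_le {n d : ℕ} (A : Matrix (Fin n) (Fin d) ℝ) (z : Fin d → ℝ) :
    l2norm (A.mulVec z) ≤ specNorm A * l2norm z := by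
  rw [l2norm_eq_norm, l2norm_eq_norm, WithLp.equiv_symm_apply, ← Matrix.toEuclideanLin_apply_piLp_toLp]
  exact (LinearMap.toContinuousLinearMap (Matrix.toEuclideanLin A)).le_opNorm _

lemma exp_lip {a b M : ℝ} (ha : a ≤ M) (hb : b ≤ M) :
    |Real.exp a - Real.exp b| ≤ Real.exp M * |a - b| := by
  rcases le_total a b with h | h
  · rw [abs_sub_comm, abs_of_nonneg (by linarith [Real.exp_le_exp.2 h]),
      abs_sub_comm, abs_of_nonneg (by linarith)]
    have h1 : (a - b) + 1 ≤ Real.exp (a - b) := Real.add_one_le_exp _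
    have h2 : Real.exp b ≤ Real.exp M := Real.exp_le_exp.2 hb
    have h3 : Real.exp a = Real.exp b * Real.exp (a - b) := by
      rw [← Real.exp_add]; ring_nf
    nlinarith [Real.exp_pos b, Real.exp_pos (a - b)]
  · rw [abs_of_nonneg (by linarith [Real.exp_le_exp.2 h]), abs_of_nonneg (by linarith)]
    have h1 : (b - a) + 1 ≤ Real.exp (b - a) := Real.add_one_le_exp _
    have h2 : Real.exp a ≤ Real.exp M := Real.exp_le_exp.2 ha
    have h3 : Real.exp b = Real.exp a * Real.exp (b - a) := by
      rw [← Real.exp_add]; ring_nf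
    nlinarith [Real.exp_pos a, Real.exp_pos (b - a)]

set_option maxHeartbeats 1000000 in
/-- ‖f(x) − f(y)‖₂ ≤ β⁻² n^{1.5} exp(3R²) ‖x − y‖₂. -/
theorem stmt_17 {n d : ℕ} (A : Matrix (Fin n) (Fin d) ℝ) (R : ℝ) (hR : 4 ≤ R)
    (hA : specNorm A ≤ R) (β : ℝ) (hβ0 : 0 < β) (hβ1 : β < 0.1)
    (x y : Fin d → ℝ)
    (hxy : linfNorm (A.mulVec (x - y)) < 0.01)
    (hax : β ≤ ∑ i, Real.exp (A.mulVec x i))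
    (hay : β ≤ ∑ i, Real.exp (A.mulVec y i))
    (hx : l2norm x ≤ R) (hy : l2norm y ≤ R) :
    l2norm (softmaxFn A x - softmaxFn A y) ≤
      (β ^ 2)⁻¹ * (n : ℝ) ^ ((3 : ℝ) / 2) * Real.exp (3 * R ^ 2) * l2norm (x - y) := by
  rcases Nat.eq_zero_or_pos n with hn0 | hn0
  · subst hn0; simp at hax; linarith
  have hn1 : (1 : ℝ) ≤ n := by exact_mod_cast hn0
  have hR0 : (0 : ℝ) < R := by linarith
  set a : Fin n → ℝ := A.mulVec x with ha_def
  set b : Fin n → ℝ := A.mulVec y with hb_def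
  set L : ℝ := l2norm (x - y) with hL_def
  have hL0 : 0 ≤ L := l2norm_nonneg _
  set sx : ℝ := ∑ i, Real.exp (a i) with hsx_def
  set sy : ℝ := ∑ i, Real.exp (b i) with hsy_def
  have hsx0 : 0 < sx := lt_of_lt_of_le hβ0 hax
  have hsy0 : 0 < sy := lt_of_lt_of_le hβ0 hay
  set E : ℝ := Real.exp (R ^ 2) with hE_def
  have hE0 : 0 < E := Real.exp_pos _
  have hE1 : 1 ≤ E := Real.one_le_exp (by positivity)
  -- entry bounds on a and b
  have hspec0 : 0 ≤ specNorm A := norm_nonneg _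
  have hbound : ∀ (z : Fin d → ℝ), l2norm z ≤ R → ∀ i, A.mulVec z i ≤ R ^ 2 := by
    intro z hz i
    have h1 := (abs_le.1 (abs_le_l2norm (A.mulVec z) i)).2
    have h2 := mulVec_l2_le A z
    have h3 : specNorm A * l2norm z ≤ R * R :=
      mul_le_mul hA hz (l2norm_nonneg z) (le_of_lt hR0)
    nlinarith
  have ha_i : ∀ i, a i ≤ R ^ 2 := hbound x hx
  have hb_i : ∀ i, b i ≤ R ^ 2 := hbound y hy
  -- difference bound
  have hd : ∀ i, |a i - b i| ≤ R * L := by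
    intro i
    have h1 : a - b = A.mulVec (x - y) := by rw [ha_def, hb_def, Matrix.mulVec_sub]
    have h2 : |(a - b) i| ≤ l2norm (A.mulVec (x - y)) := h1 ▸ abs_le_l2norm _ i
    have h3 := mulVec_l2_le A (x - y)
    have h4 : specNorm A * l2norm (x - y) ≤ R * L :=
      mul_le_mul_of_nonneg_right hA hL0
    simpa using h2.trans (h3.trans h4)
  have hexp : ∀ i, |Real.exp (a i) - Real.exp (b i)| ≤ E * (R * L) := fun i =>
    (exp_lip (ha_i i) (hb_i i)).trans (mul_le_mul_of_nonneg_left (hd i) (le_of_lt hE0))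
  have hsum : |sx - sy| ≤ n * (E * (R * L)) := by
    rw [hsx_def, hsy_def, ← Finset.sum_sub_distrib]
    calc |∑ i, (Real.exp (a i) - Real.exp (b i))|
        ≤ ∑ i, |Real.exp (a i) - Real.exp (b i)| := Finset.abs_sum_le_sum_abs _ _
      _ ≤ ∑ _i : Fin n, E * (R * L) := Finset.sum_le_sum fun i _ => hexp i
      _ = n * (E * (R * L)) := by simp [Finset.sum_const, mul_comm]
  set C : ℝ := (β ^ 2)⁻¹ * (2 * n * (R * L) * (E * E)) with hC_def
  have hβi1 : (1 : ℝ) ≤ β⁻¹ := by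
    rw [le_inv_comm₀ one_pos hβ0] <;> try rw [one_inv]
    all_goals norm_num; linarith
  have hkey : ∀ i, |sx⁻¹ * Real.exp (a i) - sy⁻¹ * Real.exp (b i)| ≤ C := by
    intro i
    have hexpb : Real.exp (b i) ≤ E := Real.exp_le_exp.2 (hb_i i)
    have hdecomp : sx⁻¹ * Real.exp (a i) - sy⁻¹ * Real.exp (b i)
        = sx⁻¹ * (Real.exp (a i) - Real.exp (b i))
          + (sy - sx) * (sx⁻¹ * sy⁻¹) * Real.exp (b i) := by
      field_simp
      ring
    have hsxinv : sx⁻¹ ≤ β⁻¹ := inv_anti₀ hβ0 hax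
    have hsyinv : sy⁻¹ ≤ β⁻¹ := inv_anti₀ hβ0 hay
    have hsxinv0 : 0 ≤ sx⁻¹ := inv_nonneg.2 hsx0.le
    have hsyinv0 : 0 ≤ sy⁻¹ := inv_nonneg.2 hsy0.le
    have t1 : sx⁻¹ * |Real.exp (a i) - Real.exp (b i)| ≤ β⁻¹ * (E * (R * L)) :=
      mul_le_mul hsxinv (hexp i) (abs_nonneg _) (by positivity)
    have t2 : |sy - sx| * (sx⁻¹ * sy⁻¹) * Real.exp (b i)
        ≤ (n * (E * (R * L))) * (β⁻¹ * β⁻¹) * E := by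
      have h5 : |sy - sx| ≤ n * (E * (R * L)) := by rw [abs_sub_comm]; exact hsum
      have h6 : sx⁻¹ * sy⁻¹ ≤ β⁻¹ * β⁻¹ := mul_le_mul hsxinv hsyinv hsyinv0 (by positivity)
      have : |sy - sx| * (sx⁻¹ * sy⁻¹) ≤ (n * (E * (R * L))) * (β⁻¹ * β⁻¹) :=
        mul_le_mul h5 h6 (by positivity) (by positivity)
      exact mul_le_mul this hexpb (Real.exp_pos _).le (by positivity)
    calc |sx⁻¹ * Real.exp (a i) - sy⁻¹ * Real.exp (b i)|
        ≤ sx⁻¹ * |Real.exp (a i) - Real.exp (b i)|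
          + |sy - sx| * (sx⁻¹ * sy⁻¹) * Real.exp (b i) := by
          rw [hdecomp]
          refine (abs_add_le _ _).trans (add_le_add ?_ ?_)
          · rw [abs_mul, abs_of_nonneg hsxinv0]
          · rw [abs_mul, abs_mul, abs_of_nonneg (mul_nonneg hsxinv0 hsyinv0),
              abs_of_nonneg (Real.exp_pos _).le]
      _ ≤ β⁻¹ * (E * (R * L)) + (n * (E * (R * L))) * (β⁻¹ * β⁻¹) * E :=
          add_le_add t1 t2
      _ ≤ C := by
          rw [hC_def, sq, mul_inv]
          have hRL : 0 ≤ R * L := by positivity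
          have hbinv0 : (0 : ℝ) ≤ β⁻¹ := by positivity
          have hb2 : β⁻¹ ≤ β⁻¹ * β⁻¹ := le_mul_of_one_le_left hbinv0 hβi1
          have hEE : E ≤ E * E := le_mul_of_one_le_left hE0.le hE1
          have s1 : β⁻¹ * E ≤ (β⁻¹ * β⁻¹) * (E * E) :=
            mul_le_mul hb2 hEE hE0.le (by positivity)
          have s2 : β⁻¹ * E * (R * L) ≤ (β⁻¹ * β⁻¹) * (E * E) * (R * L) :=
            mul_le_mul_of_nonneg_right s1 hRL
          have s3 : (β⁻¹ * β⁻¹) * (E * E) * (R * L)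
              ≤ n * ((β⁻¹ * β⁻¹) * (E * E) * (R * L)) :=
            le_mul_of_one_le_left (by positivity) hn1
          nlinarith [s2, s3]
  have hC0 : 0 ≤ C := by
    rw [hC_def]; positivity
  have hvi : ∀ i, (softmaxFn A x - softmaxFn A y) i
      = sx⁻¹ * Real.exp (a i) - sy⁻¹ * Real.exp (b i) := by
    intro i
    simp [softmaxFn, Pi.sub_apply, smul_eq_mul, hsx_def, hsy_def, ha_def, hb_def]
  have hl2 : l2norm (softmaxFn A x - softmaxFn A y) ≤ Real.sqrt n * C := by
    rw [l2norm]
    calc Real.sqrt (∑ i, (softmaxFn A x - softmaxFn A y) i ^ 2)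
        ≤ Real.sqrt (∑ _i : Fin n, C ^ 2) := by
          apply Real.sqrt_le_sqrt
          apply Finset.sum_le_sum
          intro i _
          rw [hvi i]
          have := hkey i
          rw [← sq_abs]
          exact pow_le_pow_left₀ (abs_nonneg _) this 2
      _ = Real.sqrt n * C := by
          rw [Finset.sum_const, Finset.card_univ, Fintype.card_fin, nsmul_eq_mul,
            Real.sqrt_mul (by positivity), Real.sqrt_sq hC0]
  refine hl2.trans ?_
  -- final comparison
  have hrpow : (n : ℝ) ^ ((3 : ℝ) / 2) = n * Real.sqrt n := by
    have hn0' : (0 : ℝ) < n := by linarith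
    rw [show (3 : ℝ) / 2 = 1 + 1 / 2 by norm_num, Real.rpow_add hn0', Real.rpow_one,
      Real.sqrt_eq_rpow]
  have h2R : 2 * R ≤ E := by
    have := Real.add_one_le_exp (R ^ 2)
    nlinarith
  have hE3 : E * E * E = Real.exp (3 * R ^ 2) := by
    rw [hE_def, ← Real.exp_add, ← Real.exp_add]; ring_nf
  rw [hrpow, ← hE3, hC_def]
  have base : 0 ≤ (β ^ 2)⁻¹ * n * Real.sqrt n * L * (E * E) := by positivity
  have := mul_le_mul_of_nonneg_left h2R base
  nlinarith [this]
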